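/- Let γ : ℤ → ℂ be a sequence with Σ_{j∈ℤ} |γ_j| < ∞. Then there exist unique families (A_{+,j}, B_{+,j})_{j∈ℤ} and (A_{-,j}, B_{-,j})_{j∈ℤ} of functions on S¹ satisfying the recursions [A_{+,j}; B_{+,j}] = (1+|γ_j|²)^{-1/2} · [[1, −γ_j w^{−1}], [γ_j*, w^{−1}]] · [A_{+,j+1}; B_{+,j+1}] and [A_{-,j+1}; B_{-,j+1}] = (1+|γ_j|²)^{-1/2} · [[1, γ_j], [−γ_j* w, w]] · [A_{-,j}; B_{-,j}], together with the normalizations (A_{+,j}(w), B_{+,j}(w)) → (1, 0) as j → +∞ and (A_{-,j}(w), B_{-,j}(w)) → (1, 0) as j → −∞, for every w ∈ S¹. Furthermore, for each integer j, the functions A_{-,j}, w^{−1}B_{-,j}, A_{+,j}*, and B_{+,j}* all lie in H̃₊(S¹). -/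

import Mathlib

open MeasureTheory Complex Filter Metric Topology ComplexConjugate

noncomputable section

/-- The restriction of `f : ℂ → ℂ` to the unit circle, as a function of the angle. -/
def onCircle (f : ℂ → ℂ) : ℝ → ℂ := fun θ => f (Complex.exp ((θ : ℂ) * Complex.I))

/-- The measure on angles defining `L²(S¹)`. -/
def circleMeasure : Measure ℝ := volume.restrict (Set.Ioc 0 (2 * Real.pi))

/-- The `n`-th Fourier coefficient `f̂(n) = (1/2π)∫₀^{2π} f(e^{iθ}) e^{-inθ} dθ`. -/
def fc (f : ℂ → ℂ) (n : ℤ) : ℂ :=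
  (1 / (2 * Real.pi) : ℝ) • ∫ θ in (0:ℝ)..(2 * Real.pi),
    onCircle f θ * Complex.exp (-((n : ℂ) * (θ : ℂ)) * Complex.I)

/-- membership in `L²(S¹)` -/
def MemL2C (f : ℂ → ℂ) : Prop := MemLp (onCircle f) 2 circleMeasure

/-- membership in the Hardy space `H̃₊(S¹)` -/
def MemHplusC (f : ℂ → ℂ) : Prop := MemL2C f ∧ ∀ n : ℤ, n < 0 → fc f n = 0

/-- the squared `H¹(S¹)`-norm, computed via Fourier coefficients -/
def H1SqC (f : ℂ → ℂ) : ℝ := ∑' n : ℤ, (1 + (n : ℝ)^2) * ‖fc f n‖^2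

/-- the `H¹(S¹)`-norm -/
def H1normC (f : ℂ → ℂ) : ℝ := Real.sqrt (H1SqC f)

/-- membership in the Sobolev space `H¹(S¹)` -/
def MemH1C (f : ℂ → ℂ) : Prop :=
  MemL2C f ∧ Summable (fun n : ℤ => (1 + (n : ℝ)^2) * ‖fc f n‖^2)

/-- membership in `H̃₊¹(S¹) = H¹(S¹) ∩ H̃₊(S¹)` -/
def MemH1plusC (f : ℂ → ℂ) : Prop := MemH1C f ∧ ∀ n : ℤ, n < 0 → fc f n = 0

/-- equality almost everywhere on the circle -/
def AEEqC (f g : ℂ → ℂ) : Prop := ∀ᵐ θ ∂circleMeasure, onCircle f θ = onCircle g θ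

/-- the Hardy projection `Π₊` on the circle -/
def PiPlusC (f : ℂ → ℂ) (w : ℂ) : ℂ := ∑' n : ℕ, fc f ((n : ℤ) + 1) * w ^ (n + 1)

/-- the Hardy projection `Π₋` on the circle -/
def PiMinusC (f : ℂ → ℂ) (w : ℂ) : ℂ := ∑' n : ℕ, fc f (-(n : ℤ) - 1) * w ^ (-(n : ℤ) - 1)

/-- the normalizing factor `(1+|c|²)^{-1/2}` -/
def dfac (c : ℂ) : ℂ := (((1 + ‖c‖^2) ^ (-(1/2) : ℝ) : ℝ) : ℂ)

/-- The `+` family: recursion downwards in `j` together with normalization at `+∞`. -/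
def PlusFamily (γ : ℤ → ℂ) (A B : ℤ → ℂ → ℂ) : Prop :=
  (∀ j : ℤ, ∀ w : ℂ, ‖w‖ = 1 →
    A j w = dfac (γ j) * (A (j + 1) w - γ j * w⁻¹ * B (j + 1) w) ∧
    B j w = dfac (γ j) * (conj (γ j) * A (j + 1) w + w⁻¹ * B (j + 1) w)) ∧
  (∀ w : ℂ, ‖w‖ = 1 →
    Tendsto (fun j : ℤ => A j w) atTop (𝓝 1) ∧ Tendsto (fun j : ℤ => B j w) atTop (𝓝 0))

/-- The `-` family: recursion upwards in `j` together with normalization at `-∞`. -/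
def MinusFamily (γ : ℤ → ℂ) (A B : ℤ → ℂ → ℂ) : Prop :=
  (∀ j : ℤ, ∀ w : ℂ, ‖w‖ = 1 →
    A (j + 1) w = dfac (γ j) * (A j w + γ j * B j w) ∧
    B (j + 1) w = dfac (γ j) * (-(conj (γ j)) * w * A j w + w * B j w)) ∧
  (∀ w : ℂ, ‖w‖ = 1 →
    Tendsto (fun j : ℤ => A j w) atBot (𝓝 1) ∧ Tendsto (fun j : ℤ => B j w) atBot (𝓝 0))

def dfacR (c : ℂ) : ℝ := (1 + ‖c‖^2) ^ (-(1/2) : ℝ)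

lemma dfac_eq (c : ℂ) : dfac c = ((dfacR c : ℝ) : ℂ) := rfl

lemma dfacR_pos (c : ℂ) : 0 < dfacR c := by
  apply Real.rpow_pos_of_pos; positivity

lemma dfacR_sq (c : ℂ) : (dfacR c)^2 * (1 + ‖c‖^2) = 1 := by
  have h : (0:ℝ) < 1 + ‖c‖^2 := by positivity
  rw [dfacR, ← Real.rpow_natCast _ 2, ← Real.rpow_mul h.le]
  norm_num
  rw [Real.rpow_neg_one]
  field_simp

lemma dfacR_le_one (c : ℂ) : dfacR c ≤ 1 := by
  nlinarith [dfacR_sq c, dfacR_pos c, sq_nonneg ‖c‖, norm_nonneg c]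

lemma one_sub_dfacR_le (c : ℂ) : 1 - dfacR c ≤ ‖c‖ := by
  have h := dfacR_sq c
  have h2 := dfacR_pos c
  have h3 := norm_nonneg c
  rcases le_or_gt 1 ‖c‖ with h4 | h4
  · nlinarith
  · have key : (1 - ‖c‖)^2 * (1 + ‖c‖^2) ≤ 1 := by
      nlinarith [mul_nonneg h3 (sub_nonneg.2 h4.le),
        mul_nonneg (mul_nonneg h3 h3) (by linarith : (0:ℝ) ≤ 2 - ‖c‖)]
    have key2 : (1 - ‖c‖)^2 ≤ (dfacR c)^2 := by
      have hpos : (0:ℝ) < 1 + ‖c‖^2 := by positivity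
      nlinarith
    nlinarith [sq_nonneg (dfacR c - (1 - ‖c‖))]

lemma hr_complex (c : ℂ) : (dfac c)^2 * (1 + c * conj c) = 1 := by
  rw [dfac_eq, Complex.mul_conj, Complex.normSq_eq_norm_sq]
  exact_mod_cast dfacR_sq c

/-- embed a pair into Euclidean space to get the ℓ² norm -/
def vE (p : ℂ × ℂ) : EuclideanSpace ℂ (Fin 2) := (WithLp.equiv 2 (Fin 2 → ℂ)).symm ![p.1, p.2]

def nn (p : ℂ × ℂ) : ℝ := ‖vE p‖

lemma vE_add (p q : ℂ × ℂ) : vE (p + q) = vE p + vE q := by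
  ext i; fin_cases i <;> simp [vE]

lemma vE_sub (p q : ℂ × ℂ) : vE (p - q) = vE p - vE q := by
  ext i; fin_cases i <;> simp [vE]

lemma nn_eq (p : ℂ × ℂ) : nn p = Real.sqrt (‖p.1‖^2 + ‖p.2‖^2) := by
  rw [nn, EuclideanSpace.norm_eq, Fin.sum_univ_two]
  congr 1 <;> simp [vE]

lemma nn_nonneg (p : ℂ × ℂ) : 0 ≤ nn p := norm_nonneg _

lemma nn_neg (p : ℂ × ℂ) : nn (-p) = nn p := by
  rw [nn_eq, nn_eq]; simp

lemma nn_triangle (p q : ℂ × ℂ) : nn (p + q) ≤ nn p + nn q := by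
  rw [nn, nn, nn, vE_add]; exact norm_add_le _ _

lemma nn_sub_triangle (p q r : ℂ × ℂ) : nn (p - r) ≤ nn (p - q) + nn (q - r) := by
  have : p - r = (p - q) + (q - r) := by ring
  rw [this]; exact nn_triangle _ _

lemma fst_le_nn (p : ℂ × ℂ) : ‖p.1‖ ≤ nn p := by
  rw [nn_eq]
  have h : Real.sqrt (‖p.1‖^2) ≤ Real.sqrt (‖p.1‖^2 + ‖p.2‖^2) :=
    Real.sqrt_le_sqrt (by nlinarith [sq_nonneg ‖p.2‖])
  rwa [Real.sqrt_sq (norm_nonneg _)] at h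

lemma snd_le_nn (p : ℂ × ℂ) : ‖p.2‖ ≤ nn p := by
  rw [nn_eq]
  have h : Real.sqrt (‖p.2‖^2) ≤ Real.sqrt (‖p.1‖^2 + ‖p.2‖^2) :=
    Real.sqrt_le_sqrt (by nlinarith [sq_nonneg ‖p.1‖])
  rwa [Real.sqrt_sq (norm_nonneg _)] at h

lemma dist_le_nn (p q : ℂ × ℂ) : dist p q ≤ nn (p - q) := by
  rw [Prod.dist_eq]
  apply max_le
  · rw [dist_eq_norm]; exact fst_le_nn (p - q)
  · rw [dist_eq_norm]; exact snd_le_nn (p - q)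

lemma nn_le_add (p : ℂ × ℂ) : nn p ≤ ‖p.1‖ + ‖p.2‖ := by
  rw [nn_eq]
  rw [show ‖p.1‖ + ‖p.2‖ = Real.sqrt ((‖p.1‖ + ‖p.2‖)^2) by
    rw [Real.sqrt_sq (by positivity)]]
  exact Real.sqrt_le_sqrt (by nlinarith [norm_nonneg p.1, norm_nonneg p.2])

/-- transfer step for the + family -/
def Sp (c w : ℂ) (p : ℂ × ℂ) : ℂ × ℂ :=
  (dfac c * (p.1 - c * w⁻¹ * p.2), dfac c * (conj c * p.1 + w⁻¹ * p.2))

/-- transfer step for the - family -/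
def Sm (c w : ℂ) (p : ℂ × ℂ) : ℂ × ℂ :=
  (dfac c * (p.1 + c * p.2), dfac c * (-(conj c) * w * p.1 + w * p.2))

lemma Sp_sub (c w : ℂ) (p q : ℂ × ℂ) : Sp c w (p - q) = Sp c w p - Sp c w q := by
  simp only [Sp, Prod.fst_sub, Prod.snd_sub, Prod.mk_sub_mk, Prod.mk.injEq]
  constructor <;> ring

lemma Sm_sub (c w : ℂ) (p q : ℂ × ℂ) : Sm c w (p - q) = Sm c w p - Sm c w q := by
  simp only [Sm, Prod.fst_sub, Prod.snd_sub, Prod.mk_sub_mk, Prod.mk.injEq]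
  constructor <;> ring

lemma norm_sq_complex (z : ℂ) : (‖z‖^2 : ℂ) = z * conj z := by
  rw [Complex.mul_conj, Complex.normSq_eq_norm_sq]; push_cast; ring

lemma nn_Sp (c w : ℂ) (hw : ‖w‖ = 1) (p : ℂ × ℂ) : nn (Sp c w p) = nn p := by
  have hinv : w⁻¹ = conj w := Complex.inv_eq_conj hw
  have hww : w * conj w = 1 := by
    rw [Complex.mul_conj, Complex.normSq_eq_norm_sq, hw]; norm_num
  rw [nn_eq, nn_eq]
  congr 1
  have key : (↑(‖(Sp c w p).1‖^2 + ‖(Sp c w p).2‖^2) : ℂ) = (↑(‖p.1‖^2 + ‖p.2‖^2) : ℂ) := by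
    push_cast
    rw [norm_sq_complex, norm_sq_complex, norm_sq_complex, norm_sq_complex]
    simp only [Sp, hinv, map_mul, map_add, map_sub, Complex.conj_conj,
      dfac_eq, Complex.conj_ofReal]
    rw [← dfac_eq]
    linear_combination (p.1 * conj p.1 + p.2 * conj p.2) * hr_complex c +
      ((dfac c)^2 * (1 + c * conj c) * p.2 * conj p.2) * hww
  exact_mod_cast key

lemma nn_Sm (c w : ℂ) (hw : ‖w‖ = 1) (p : ℂ × ℂ) : nn (Sm c w p) = nn p := by
  have hww : w * conj w = 1 := by
    rw [Complex.mul_conj, Complex.normSq_eq_norm_sq, hw]; norm_num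
  rw [nn_eq, nn_eq]
  congr 1
  have key : (↑(‖(Sm c w p).1‖^2 + ‖(Sm c w p).2‖^2) : ℂ) = (↑(‖p.1‖^2 + ‖p.2‖^2) : ℂ) := by
    push_cast
    rw [norm_sq_complex, norm_sq_complex, norm_sq_complex, norm_sq_complex]
    simp only [Sm, map_mul, map_add, map_neg, Complex.conj_conj,
      dfac_eq, Complex.conj_ofReal]
    rw [← dfac_eq]
    linear_combination (p.1 * conj p.1 + p.2 * conj p.2) * hr_complex c +
      ((dfac c)^2 * (c * conj c * p.1 * conj p.1 + p.2 * conj p.2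
        - conj c * p.1 * conj p.2 - c * p.2 * conj p.1)) * hww
  exact_mod_cast key

def e1 : ℂ × ℂ := (1, 0)

lemma nn_e1 : nn e1 = 1 := by rw [nn_eq]; simp [e1]

lemma nn_Sp_e1 (c w : ℂ) (hw : ‖w‖ = 1) : nn (Sp c w e1 - e1) ≤ 2 * ‖c‖ := by
  have h1 : (Sp c w e1 - e1).1 = dfac c - 1 := by simp [Sp, e1]
  have h2 : (Sp c w e1 - e1).2 = dfac c * conj c := by simp [Sp, e1]
  calc nn (Sp c w e1 - e1) ≤ ‖(Sp c w e1 - e1).1‖ + ‖(Sp c w e1 - e1).2‖ := nn_le_add _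
    _ ≤ 2 * ‖c‖ := by
      rw [h1, h2]
      have hd1 : ‖dfac c - 1‖ ≤ ‖c‖ := by
        rw [dfac_eq, show ((dfacR c : ℝ):ℂ) - 1 = ((dfacR c - 1 : ℝ):ℂ) by push_cast; ring,
          Complex.norm_real, Real.norm_eq_abs, abs_sub_comm,
          _root_.abs_of_nonneg (by linarith [dfacR_le_one c])]
        linarith [one_sub_dfacR_le c]
      have hd2 : ‖dfac c * conj c‖ ≤ ‖c‖ := by
        rw [norm_mul, dfac_eq, Complex.norm_real, Real.norm_eq_abs,
          _root_.abs_of_nonneg (dfacR_pos c).le, RCLike.norm_conj]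
        nlinarith [dfacR_le_one c, dfacR_pos c, norm_nonneg c]
      linarith

lemma nn_Sm_e1 (c w : ℂ) (hw : ‖w‖ = 1) : nn (Sm c w e1 - e1) ≤ 2 * ‖c‖ := by
  have h1 : (Sm c w e1 - e1).1 = dfac c - 1 := by simp [Sm, e1]
  have h2 : (Sm c w e1 - e1).2 = dfac c * (-(conj c)) * w := by simp [Sm, e1]; ring
  calc nn (Sm c w e1 - e1) ≤ ‖(Sm c w e1 - e1).1‖ + ‖(Sm c w e1 - e1).2‖ := nn_le_add _
    _ ≤ 2 * ‖c‖ := by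
      rw [h1, h2]
      have hd1 : ‖dfac c - 1‖ ≤ ‖c‖ := by
        rw [dfac_eq, show ((dfacR c : ℝ):ℂ) - 1 = ((dfacR c - 1 : ℝ):ℂ) by push_cast; ring,
          Complex.norm_real, Real.norm_eq_abs, abs_sub_comm,
          _root_.abs_of_nonneg (by linarith [dfacR_le_one c])]
        linarith [one_sub_dfacR_le c]
      have hd2 : ‖dfac c * (-(conj c)) * w‖ ≤ ‖c‖ := by
        rw [norm_mul, norm_mul, hw, mul_one, dfac_eq, Complex.norm_real, Real.norm_eq_abs,
          _root_.abs_of_nonneg (dfacR_pos c).le, norm_neg, RCLike.norm_conj]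
        nlinarith [dfacR_le_one c, dfacR_pos c, norm_nonneg c]
      linarith

/-- `f` agrees on the unit circle with a polynomial with nonnegative powers -/
def PolyPlus (f : ℂ → ℂ) : Prop :=
  ∃ (N : ℕ) (c : ℕ → ℂ), ∀ w : ℂ, ‖w‖ = 1 → f w = ∑ n ∈ Finset.range N, c n * w ^ n

lemma norm_exp_circle (θ : ℝ) : ‖Complex.exp ((θ:ℂ) * Complex.I)‖ = 1 := by
  exact Complex.norm_exp_ofReal_mul_I θ

lemma polyPlus_const (a : ℂ) : PolyPlus (fun _ => a) := by
  exact ⟨1, fun _ => a, fun w _ => by simp⟩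

lemma polyPlus_add {f g : ℂ → ℂ} (hf : PolyPlus f) (hg : PolyPlus g) :
    PolyPlus (fun w => f w + g w) := by
  obtain ⟨N1, c1, h1⟩ := hf
  obtain ⟨N2, c2, h2⟩ := hg
  refine ⟨max N1 N2, fun n => (if n < N1 then c1 n else 0) + (if n < N2 then c2 n else 0),
    fun w hw => ?_⟩
  beta_reduce
  rw [h1 w hw, h2 w hw]
  simp only [add_mul]
  rw [Finset.sum_add_distrib]
  congr 1
  · rw [← Finset.sum_subset (Finset.range_subset_range.2 (le_max_left N1 N2))]
    · exact Finset.sum_congr rfl fun x hx => by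
        rw [if_pos (Finset.mem_range.1 hx)]
    · intro x _ hx
      rw [if_neg (fun h => hx (Finset.mem_range.2 h)), zero_mul]
  · rw [← Finset.sum_subset (Finset.range_subset_range.2 (le_max_right N1 N2))]
    · exact Finset.sum_congr rfl fun x hx => by
        rw [if_pos (Finset.mem_range.1 hx)]
    · intro x _ hx
      rw [if_neg (fun h => hx (Finset.mem_range.2 h)), zero_mul]

lemma polyPlus_const_mul {f : ℂ → ℂ} (a : ℂ) (hf : PolyPlus f) :
    PolyPlus (fun w => a * f w) := by
  obtain ⟨N, c, h⟩ := hf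
  refine ⟨N, fun n => a * c n, fun w hw => ?_⟩
  beta_reduce
  rw [h w hw, Finset.mul_sum]
  exact Finset.sum_congr rfl fun x _ => by ring

lemma polyPlus_sub {f g : ℂ → ℂ} (hf : PolyPlus f) (hg : PolyPlus g) :
    PolyPlus (fun w => f w - g w) := by
  have h := polyPlus_add hf (polyPlus_const_mul (-1) hg)
  have e : (fun w => f w - g w) = (fun w => f w + (-1) * g w) := by funext w; ring
  rw [e]; exact h

lemma polyPlus_mul_w {f : ℂ → ℂ} (hf : PolyPlus f) :
    PolyPlus (fun w => w * f w) := by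
  obtain ⟨N, c, h⟩ := hf
  refine ⟨N + 1, fun n => Nat.rec 0 (fun m _ => c m) n, fun w hw => ?_⟩
  beta_reduce
  rw [h w hw, Finset.sum_range_succ']
  simp only [Finset.mul_sum]
  rw [show (Nat.rec (motive := fun _ => ℂ) 0 (fun m _ => c m) 0 : ℂ) = 0 from rfl]
  rw [zero_mul, add_zero]
  exact Finset.sum_congr rfl fun x _ => by rw [pow_succ]; ring

lemma continuous_onCircle_polyPlus {f : ℂ → ℂ} (hf : PolyPlus f) :
    Continuous (onCircle f) := by
  obtain ⟨N, c, h⟩ := hf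
  have : onCircle f = fun θ : ℝ => ∑ n ∈ Finset.range N, c n * Complex.exp ((θ:ℂ) * Complex.I) ^ n := by
    funext θ
    exact h _ (norm_exp_circle θ)
  rw [this]
  continuity

lemma fc_polyPlus {f : ℂ → ℂ} (hf : PolyPlus f) {m : ℤ} (hm : m < 0) : fc f m = 0 := by
  obtain ⟨N, c, h⟩ := hf
  have hoc : ∀ θ : ℝ, onCircle f θ * Complex.exp (-((m : ℂ) * (θ : ℂ)) * Complex.I)
      = ∑ n ∈ Finset.range N, c n * Complex.exp ((((n : ℤ) - m : ℤ) : ℂ) * Complex.I * (θ:ℂ)) := by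
    intro θ
    rw [onCircle, h _ (norm_exp_circle θ), Finset.sum_mul]
    refine Finset.sum_congr rfl fun n _ => ?_
    rw [← Complex.exp_nat_mul, mul_assoc, ← Complex.exp_add]
    push_cast
    ring_nf
  rw [fc]
  rw [intervalIntegral.integral_congr (g := fun θ : ℝ =>
      ∑ n ∈ Finset.range N, c n * Complex.exp ((((n : ℤ) - m : ℤ) : ℂ) * Complex.I * (θ:ℂ)))
      (fun θ _ => hoc θ)]
  rw [intervalIntegral.integral_finset_sum]
  · have : ∀ n ∈ Finset.range N,
        (∫ θ in (0:ℝ)..(2*Real.pi), c n * Complex.exp ((((n : ℤ) - m : ℤ) : ℂ) * Complex.I * (θ:ℂ))) = 0 := by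
      intro n _
      rw [intervalIntegral.integral_const_mul]
      have hk : (((n : ℤ) - m : ℤ) : ℂ) * Complex.I ≠ 0 := by
        apply mul_ne_zero _ Complex.I_ne_zero
        exact_mod_cast sub_ne_zero.2 (by omega : (n : ℤ) ≠ m)
      rw [integral_exp_mul_complex hk]
      have h2π : ((((n : ℤ) - m : ℤ) : ℂ) * Complex.I) * ((2 * Real.pi : ℝ) : ℂ)
          = (((n : ℤ) - m : ℤ) : ℂ) * (2 * (Real.pi : ℂ) * Complex.I) := by push_cast; ring
      rw [h2π, Complex.exp_int_mul_two_pi_mul_I]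
      simp
    rw [Finset.sum_congr rfl this]
    simp
  · intro n _
    apply Continuous.intervalIntegrable
    continuity

instance : IsFiniteMeasure circleMeasure := by
  constructor
  rw [circleMeasure, Measure.restrict_apply_univ, Real.volume_Ioc]
  exact ENNReal.ofReal_lt_top

lemma norm_exp_neg_int (m : ℤ) (θ : ℝ) : ‖Complex.exp (-((m : ℂ) * (θ : ℂ)) * Complex.I)‖ = 1 := by
  have : -((m : ℂ) * (θ : ℂ)) * Complex.I = (((-(m : ℝ) * θ : ℝ)) : ℂ) * Complex.I := by push_cast; ring
  rw [this]
  exact norm_exp_circle _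

lemma memHplusC_of_approx (f : ℂ → ℂ) (g : ℕ → ℂ → ℂ) (δ : ℕ → ℝ)
    (hδ : Tendsto δ atTop (𝓝 0))
    (ha : ∀ (n : ℕ) (w : ℂ), ‖w‖ = 1 → ‖f w - g n w‖ ≤ δ n)
    (hg : ∀ n, PolyPlus (g n))
    (hb : ∀ w : ℂ, ‖w‖ = 1 → ‖f w‖ ≤ 1) : MemHplusC f := by
  -- uniform convergence on the circle
  have hunif : TendstoUniformly (fun n => onCircle (g n)) (onCircle f) atTop := by
    rw [Metric.tendstoUniformly_iff]
    intro ε hε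
    filter_upwards [hδ.eventually (eventually_lt_nhds hε)] with n hn θ
    rw [dist_eq_norm]
    exact lt_of_le_of_lt (ha n _ (norm_exp_circle θ)) hn
  have hcont : Continuous (onCircle f) :=
    hunif.continuous (Eventually.of_forall fun n => continuous_onCircle_polyPlus (hg n)).frequently
  constructor
  · exact MemLp.of_bound hcont.aestronglyMeasurable 1
      (Eventually.of_forall fun θ => hb _ (norm_exp_circle θ))
  · intro m hm
    have hzero : ∀ n, fc (g n) m = 0 := fun n => fc_polyPlus (hg n) hm
    have hbound : ∀ n, ‖fc f m‖ ≤ δ n := by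
      intro n
      have hgc : Continuous (onCircle (g n)) := continuous_onCircle_polyPlus (hg n)
      have hint1 : IntervalIntegrable
          (fun θ : ℝ => onCircle f θ * Complex.exp (-((m : ℂ) * (θ : ℂ)) * Complex.I)) volume 0 (2*Real.pi) := by
        apply Continuous.intervalIntegrable
        exact hcont.mul (by continuity)
      have hint2 : IntervalIntegrable
          (fun θ : ℝ => onCircle (g n) θ * Complex.exp (-((m : ℂ) * (θ : ℂ)) * Complex.I)) volume 0 (2*Real.pi) := by
        apply Continuous.intervalIntegrable
        exact hgc.mul (by continuity)
      have hdiff : fc f m - fc (g n) m = (1 / (2 * Real.pi) : ℝ) •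
          ∫ θ in (0:ℝ)..(2*Real.pi),
            (onCircle f θ - onCircle (g n) θ) * Complex.exp (-((m : ℂ) * (θ : ℂ)) * Complex.I) := by
        rw [fc, fc, ← smul_sub, ← intervalIntegral.integral_sub hint1 hint2]
        congr 1
        apply intervalIntegral.integral_congr
        intro θ _
        ring
      have : ‖fc f m - fc (g n) m‖ ≤ δ n := by
        rw [hdiff, norm_smul]
        have hnorm : ‖∫ θ in (0:ℝ)..(2*Real.pi),
            (onCircle f θ - onCircle (g n) θ) * Complex.exp (-((m : ℂ) * (θ : ℂ)) * Complex.I)‖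
            ≤ δ n * |2*Real.pi - 0| := by
          apply intervalIntegral.norm_integral_le_of_norm_le_const
          intro θ _
          rw [norm_mul, norm_exp_neg_int, mul_one]
          exact ha n _ (norm_exp_circle θ)
        have hδn : 0 ≤ δ n := le_trans (norm_nonneg _) (ha n 1 (by norm_num))
        calc ‖(1 / (2 * Real.pi) : ℝ)‖ * ‖∫ θ in (0:ℝ)..(2*Real.pi),
              (onCircle f θ - onCircle (g n) θ) * Complex.exp (-((m : ℂ) * (θ : ℂ)) * Complex.I)‖
            ≤ (1 / (2 * Real.pi)) * (δ n * |2*Real.pi - 0|) := by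
              apply mul_le_mul _ hnorm (norm_nonneg _) (by positivity)
              rw [Real.norm_eq_abs, _root_.abs_of_nonneg (by positivity)]
          _ = δ n := by
              rw [sub_zero, _root_.abs_of_nonneg (by positivity)]
              field_simp
      rw [hzero n, sub_zero] at this
      exact this
    have : ‖fc f m‖ ≤ 0 := ge_of_tendsto hδ (Eventually.of_forall hbound)
    simpa using le_antisymm this (norm_nonneg _)

lemma continuous_nn : Continuous nn := by
  have : nn = fun p : ℂ × ℂ => Real.sqrt (‖p.1‖^2 + ‖p.2‖^2) := funext nn_eq
  rw [this]; fun_prop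

lemma nn_le_two_dist (p q : ℂ × ℂ) : nn (p - q) ≤ 2 * dist p q := by
  have h := nn_le_add (p - q)
  have h1 : ‖(p - q).1‖ ≤ dist p q := by
    rw [Prod.fst_sub, ← dist_eq_norm]; exact le_max_left _ _ |>.trans (le_of_eq (Prod.dist_eq).symm)
  have h2 : ‖(p - q).2‖ ≤ dist p q := by
    rw [Prod.snd_sub, ← dist_eq_norm]; exact le_max_right _ _ |>.trans (le_of_eq (Prod.dist_eq).symm)
  linarith

section Gamma
variable (γ : ℤ → ℂ)

def eps (i : ℤ) : ℝ := 2 * ‖γ i‖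

def Pp : ℕ → ℤ → ℂ → ℂ × ℂ
  | 0, _, _ => e1
  | n+1, j, w => Sp (γ j) w (Pp n (j+1) w)

def Pm : ℕ → ℤ → ℂ → ℂ × ℂ
  | 0, _, _ => e1
  | n+1, j, w => Sm (γ (j-1)) w (Pm n (j-1) w)

def tailp (j : ℤ) : ℝ := ∑' i : ℕ, eps γ (j + i)
def tailm (j : ℤ) : ℝ := ∑' i : ℕ, eps γ (j - 1 - i)

variable {γ}

lemma eps_nonneg (i : ℤ) : 0 ≤ eps γ i := by unfold eps; positivity

lemma heps (hγ : Summable (fun j : ℤ => ‖γ j‖)) : Summable (eps γ) := hγ.mul_left 2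

lemma summable_tailp (hγ : Summable (fun j : ℤ => ‖γ j‖)) (j : ℤ) :
    Summable (fun i : ℕ => eps γ (j + i)) :=
  (heps hγ).comp_injective (fun a b h => by omega)

lemma summable_tailm (hγ : Summable (fun j : ℤ => ‖γ j‖)) (j : ℤ) :
    Summable (fun i : ℕ => eps γ (j - 1 - i)) :=
  (heps hγ).comp_injective (fun a b h => by omega)

lemma tailp_nonneg (j : ℤ) : 0 ≤ tailp γ j := tsum_nonneg fun i => eps_nonneg _
lemma tailm_nonneg (j : ℤ) : 0 ≤ tailm γ j := tsum_nonneg fun i => eps_nonneg _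

lemma tailp_succ (hγ : Summable (fun j : ℤ => ‖γ j‖)) (j : ℤ) :
    tailp γ j = eps γ j + tailp γ (j+1) := by
  rw [tailp, (summable_tailp hγ j).tsum_eq_zero_add]
  congr 1
  · simp
  · rw [tailp]
    congr 1; funext i; congr 1; push_cast; ring

lemma tailm_succ (hγ : Summable (fun j : ℤ => ‖γ j‖)) (j : ℤ) :
    tailm γ j = eps γ (j-1) + tailm γ (j-1) := by
  rw [tailm, (summable_tailm hγ j).tsum_eq_zero_add]
  congr 1
  · simp
  · rw [tailm]
    congr 1; funext i; congr 1; push_cast; ring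


lemma nn_Pp (n : ℕ) (j : ℤ) {w : ℂ} (hw : ‖w‖ = 1) : nn (Pp γ n j w) = 1 := by
  induction n generalizing j with
  | zero => exact nn_e1
  | succ n ih => rw [Pp, nn_Sp _ _ hw, ih]

lemma nn_Pm (n : ℕ) (j : ℤ) {w : ℂ} (hw : ‖w‖ = 1) : nn (Pm γ n j w) = 1 := by
  induction n generalizing j with
  | zero => exact nn_e1
  | succ n ih => rw [Pm, nn_Sm _ _ hw, ih]

lemma Pp_step (n : ℕ) (j : ℤ) {w : ℂ} (hw : ‖w‖ = 1) :
    nn (Pp γ n j w - Pp γ (n+1) j w) ≤ eps γ (j + n) := by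
  induction n generalizing j with
  | zero =>
    show nn (e1 - Sp (γ j) w (Pp γ 0 (j+1) w)) ≤ _
    rw [show e1 - Sp (γ j) w (Pp γ 0 (j+1) w) = -(Sp (γ j) w e1 - e1) by rw [Pp]; ring,
      nn_neg]
    simpa [eps] using nn_Sp_e1 (γ j) w hw
  | succ n ih =>
    show nn (Sp (γ j) w (Pp γ n (j+1) w) - Sp (γ j) w (Pp γ (n+1) (j+1) w)) ≤ _
    rw [← Sp_sub, nn_Sp _ _ hw]
    have := ih (j+1)
    convert this using 2
    push_cast; ring

lemma Pm_step (n : ℕ) (j : ℤ) {w : ℂ} (hw : ‖w‖ = 1) :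
    nn (Pm γ n j w - Pm γ (n+1) j w) ≤ eps γ (j - 1 - n) := by
  induction n generalizing j with
  | zero =>
    show nn (e1 - Sm (γ (j-1)) w (Pm γ 0 (j-1) w)) ≤ _
    rw [show e1 - Sm (γ (j-1)) w (Pm γ 0 (j-1) w) = -(Sm (γ (j-1)) w e1 - e1) by rw [Pm]; ring,
      nn_neg]
    simpa [eps] using nn_Sm_e1 (γ (j-1)) w hw
  | succ n ih =>
    show nn (Sm (γ (j-1)) w (Pm γ n (j-1) w) - Sm (γ (j-1)) w (Pm γ (n+1) (j-1) w)) ≤ _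
    rw [← Sm_sub, nn_Sm _ _ hw]
    have := ih (j-1)
    convert this using 2
    push_cast; ring

lemma Pp_chain (n k : ℕ) (j : ℤ) {w : ℂ} (hw : ‖w‖ = 1) :
    nn (Pp γ n j w - Pp γ (n+k) j w) ≤ ∑ i ∈ Finset.range k, eps γ (j + n + i) := by
  induction k with
  | zero => simp [nn_eq]
  | succ k ih =>
    calc nn (Pp γ n j w - Pp γ (n+(k+1)) j w)
        ≤ nn (Pp γ n j w - Pp γ (n+k) j w) + nn (Pp γ (n+k) j w - Pp γ (n+k+1) j w) := by
          rw [show n+(k+1) = n+k+1 by ring]; exact nn_sub_triangle _ _ _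
      _ ≤ (∑ i ∈ Finset.range k, eps γ (j + n + i)) + eps γ (j + n + k) := by
          have h2 := Pp_step (γ := γ) (n+k) j hw
          push_cast at h2 ⊢
          have : (j : ℤ) + (↑n + ↑k) = j + ↑n + ↑k := by ring
          rw [this] at h2
          linarith [ih]
      _ = ∑ i ∈ Finset.range (k+1), eps γ (j + n + i) := by
          rw [Finset.sum_range_succ]

lemma Pm_chain (n k : ℕ) (j : ℤ) {w : ℂ} (hw : ‖w‖ = 1) :
    nn (Pm γ n j w - Pm γ (n+k) j w) ≤ ∑ i ∈ Finset.range k, eps γ (j - 1 - n - i) := by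
  induction k with
  | zero => simp [nn_eq]
  | succ k ih =>
    calc nn (Pm γ n j w - Pm γ (n+(k+1)) j w)
        ≤ nn (Pm γ n j w - Pm γ (n+k) j w) + nn (Pm γ (n+k) j w - Pm γ (n+k+1) j w) := by
          rw [show n+(k+1) = n+k+1 by ring]; exact nn_sub_triangle _ _ _
      _ ≤ (∑ i ∈ Finset.range k, eps γ (j - 1 - n - i)) + eps γ (j - 1 - n - k) := by
          have h2 := Pm_step (γ := γ) (n+k) j hw
          push_cast at h2 ⊢
          have : (j : ℤ) - 1 - (↑n + ↑k) = j - 1 - ↑n - ↑k := by ring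
          rw [this] at h2
          linarith [ih]
      _ = ∑ i ∈ Finset.range (k+1), eps γ (j - 1 - n - i) := by
          rw [Finset.sum_range_succ]

lemma Pp_chain' (hγ : Summable (fun j : ℤ => ‖γ j‖)) (n k : ℕ) (j : ℤ) {w : ℂ} (hw : ‖w‖ = 1) :
    nn (Pp γ n j w - Pp γ (n+k) j w) ≤ tailp γ (j + n) := by
  refine (Pp_chain n k j hw).trans ?_
  rw [tailp]
  apply Summable.sum_le_tsum _ (fun i _ => eps_nonneg _) (summable_tailp hγ (j + n))

lemma Pm_chain' (hγ : Summable (fun j : ℤ => ‖γ j‖)) (n k : ℕ) (j : ℤ) {w : ℂ} (hw : ‖w‖ = 1) :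
    nn (Pm γ n j w - Pm γ (n+k) j w) ≤ tailm γ (j - n) := by
  refine (Pm_chain n k j hw).trans ?_
  rw [tailm]
  have : ∀ i : ℕ, eps γ (j - 1 - n - i) = eps γ (j - n - 1 - i) := by
    intro i; congr 1; ring
  simp_rw [this]
  apply Summable.sum_le_tsum _ (fun i _ => eps_nonneg _) (summable_tailm hγ (j - n))

lemma Pp_e1 (hγ : Summable (fun j : ℤ => ‖γ j‖)) (n : ℕ) (j : ℤ) {w : ℂ} (hw : ‖w‖ = 1) :
    nn (Pp γ n j w - e1) ≤ tailp γ j := by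
  induction n generalizing j with
  | zero => simp [Pp, nn_eq, tailp_nonneg]
  | succ n ih =>
    calc nn (Pp γ (n+1) j w - e1)
        ≤ nn (Pp γ (n+1) j w - Sp (γ j) w e1) + nn (Sp (γ j) w e1 - e1) := nn_sub_triangle _ _ _
      _ ≤ tailp γ (j+1) + eps γ j := by
          have h1 : nn (Pp γ (n+1) j w - Sp (γ j) w e1) = nn (Pp γ n (j+1) w - e1) := by
            rw [Pp, ← Sp_sub, nn_Sp _ _ hw]
          rw [h1]
          have := nn_Sp_e1 (γ j) w hw
          have h3 := ih (j+1)
          unfold eps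
          linarith
      _ = tailp γ j := by rw [tailp_succ hγ j]; exact add_comm _ _

lemma Pm_e1 (hγ : Summable (fun j : ℤ => ‖γ j‖)) (n : ℕ) (j : ℤ) {w : ℂ} (hw : ‖w‖ = 1) :
    nn (Pm γ n j w - e1) ≤ tailm γ j := by
  induction n generalizing j with
  | zero => simp [Pm, nn_eq, tailm_nonneg]
  | succ n ih =>
    calc nn (Pm γ (n+1) j w - e1)
        ≤ nn (Pm γ (n+1) j w - Sm (γ (j-1)) w e1) + nn (Sm (γ (j-1)) w e1 - e1) := nn_sub_triangle _ _ _
      _ ≤ tailm γ (j-1) + eps γ (j-1) := by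
          have h1 : nn (Pm γ (n+1) j w - Sm (γ (j-1)) w e1) = nn (Pm γ n (j-1) w - e1) := by
            rw [Pm, ← Sm_sub, nn_Sm _ _ hw]
          rw [h1]
          have := nn_Sm_e1 (γ (j-1)) w hw
          have h3 := ih (j-1)
          unfold eps
          linarith
      _ = tailm γ j := by rw [tailm_succ hγ j]; exact add_comm _ _


lemma cauchy_Pp (hγ : Summable (fun j : ℤ => ‖γ j‖)) (j : ℤ) {w : ℂ} (hw : ‖w‖ = 1) :
    CauchySeq (fun n => Pp γ n j w) := by
  apply cauchySeq_of_dist_le_of_summable (fun n => eps γ (j + n))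
  · intro n
    exact (dist_le_nn _ _).trans (Pp_step n j hw)
  · exact summable_tailp hγ j

lemma cauchy_Pm (hγ : Summable (fun j : ℤ => ‖γ j‖)) (j : ℤ) {w : ℂ} (hw : ‖w‖ = 1) :
    CauchySeq (fun n => Pm γ n j w) := by
  apply cauchySeq_of_dist_le_of_summable (fun n => eps γ (j - 1 - n))
  · intro n
    exact (dist_le_nn _ _).trans (Pm_step n j hw)
  · exact summable_tailm hγ j

end Gamma

open Classical in
def Xp (γ : ℤ → ℂ) (j : ℤ) (w : ℂ) : ℂ × ℂ :=
  if h : ∃ L, Tendsto (fun n => Pp γ n j w) atTop (𝓝 L) then h.choose else e1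

open Classical in
def Xm (γ : ℤ → ℂ) (j : ℤ) (w : ℂ) : ℂ × ℂ :=
  if h : ∃ L, Tendsto (fun n => Pm γ n j w) atTop (𝓝 L) then h.choose else e1

section Gamma2
variable {γ : ℤ → ℂ}

lemma tendsto_Xp (hγ : Summable (fun j : ℤ => ‖γ j‖)) (j : ℤ) {w : ℂ} (hw : ‖w‖ = 1) :
    Tendsto (fun n => Pp γ n j w) atTop (𝓝 (Xp γ j w)) := by
  have h : ∃ L, Tendsto (fun n => Pp γ n j w) atTop (𝓝 L) :=
    cauchySeq_tendsto_of_complete (cauchy_Pp hγ j hw)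
  rw [Xp]
  rw [dif_pos h]
  exact h.choose_spec

lemma tendsto_Xm (hγ : Summable (fun j : ℤ => ‖γ j‖)) (j : ℤ) {w : ℂ} (hw : ‖w‖ = 1) :
    Tendsto (fun n => Pm γ n j w) atTop (𝓝 (Xm γ j w)) := by
  have h : ∃ L, Tendsto (fun n => Pm γ n j w) atTop (𝓝 L) :=
    cauchySeq_tendsto_of_complete (cauchy_Pm hγ j hw)
  rw [Xm]
  rw [dif_pos h]
  exact h.choose_spec

lemma tendsto_Sp {c w : ℂ} (hw : ‖w‖ = 1) {x : ℕ → ℂ × ℂ} {L : ℂ × ℂ}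
    (hx : Tendsto x atTop (𝓝 L)) :
    Tendsto (fun n => Sp c w (x n)) atTop (𝓝 (Sp c w L)) := by
  rw [tendsto_iff_dist_tendsto_zero] at hx ⊢
  apply squeeze_zero (fun n => dist_nonneg) (g := fun n => 2 * dist (x n) L)
  · intro n
    calc dist (Sp c w (x n)) (Sp c w L) ≤ nn (Sp c w (x n) - Sp c w L) := dist_le_nn _ _
      _ = nn (x n - L) := by rw [← Sp_sub, nn_Sp _ _ hw]
      _ ≤ 2 * dist (x n) L := nn_le_two_dist _ _
  · simpa using hx.const_mul 2

lemma tendsto_Sm {c w : ℂ} (hw : ‖w‖ = 1) {x : ℕ → ℂ × ℂ} {L : ℂ × ℂ}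
    (hx : Tendsto x atTop (𝓝 L)) :
    Tendsto (fun n => Sm c w (x n)) atTop (𝓝 (Sm c w L)) := by
  rw [tendsto_iff_dist_tendsto_zero] at hx ⊢
  apply squeeze_zero (fun n => dist_nonneg) (g := fun n => 2 * dist (x n) L)
  · intro n
    calc dist (Sm c w (x n)) (Sm c w L) ≤ nn (Sm c w (x n) - Sm c w L) := dist_le_nn _ _
      _ = nn (x n - L) := by rw [← Sm_sub, nn_Sm _ _ hw]
      _ ≤ 2 * dist (x n) L := nn_le_two_dist _ _
  · simpa using hx.const_mul 2

lemma Xp_rec (hγ : Summable (fun j : ℤ => ‖γ j‖)) (j : ℤ) {w : ℂ} (hw : ‖w‖ = 1) :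
    Xp γ j w = Sp (γ j) w (Xp γ (j+1) w) := by
  have h1 : Tendsto (fun n => Pp γ (n+1) j w) atTop (𝓝 (Xp γ j w)) :=
    (tendsto_Xp hγ j hw).comp (tendsto_add_atTop_nat 1)
  have h2 : Tendsto (fun n => Pp γ (n+1) j w) atTop (𝓝 (Sp (γ j) w (Xp γ (j+1) w))) := by
    have := tendsto_Sp (c := γ j) hw (tendsto_Xp hγ (j+1) hw)
    exact this
  exact tendsto_nhds_unique h1 h2

lemma Xm_rec (hγ : Summable (fun j : ℤ => ‖γ j‖)) (j : ℤ) {w : ℂ} (hw : ‖w‖ = 1) :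
    Xm γ (j+1) w = Sm (γ j) w (Xm γ j w) := by
  have h1 : Tendsto (fun n => Pm γ (n+1) (j+1) w) atTop (𝓝 (Xm γ (j+1) w)) :=
    (tendsto_Xm hγ (j+1) hw).comp (tendsto_add_atTop_nat 1)
  have h2 : Tendsto (fun n => Pm γ (n+1) (j+1) w) atTop (𝓝 (Sm (γ j) w (Xm γ j w))) := by
    have h3 := tendsto_Sm (c := γ j) hw (tendsto_Xm hγ j hw)
    have h4 : ∀ n, Pm γ (n+1) (j+1) w = Sm (γ j) w (Pm γ n j w) := by
      intro n
      show Sm (γ ((j+1)-1)) w (Pm γ n ((j+1)-1) w) = _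
      norm_num
    simpa [h4] using h3
  exact tendsto_nhds_unique h1 h2

lemma nn_Xp_e1 (hγ : Summable (fun j : ℤ => ‖γ j‖)) (j : ℤ) {w : ℂ} (hw : ‖w‖ = 1) :
    nn (Xp γ j w - e1) ≤ tailp γ j := by
  have h1 : Tendsto (fun n => nn (Pp γ n j w - e1)) atTop (𝓝 (nn (Xp γ j w - e1))) :=
    (continuous_nn.tendsto _).comp ((tendsto_Xp hγ j hw).sub_const e1)
  exact le_of_tendsto h1 (Eventually.of_forall fun n => Pp_e1 hγ n j hw)

lemma nn_Xm_e1 (hγ : Summable (fun j : ℤ => ‖γ j‖)) (j : ℤ) {w : ℂ} (hw : ‖w‖ = 1) :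
    nn (Xm γ j w - e1) ≤ tailm γ j := by
  have h1 : Tendsto (fun n => nn (Pm γ n j w - e1)) atTop (𝓝 (nn (Xm γ j w - e1))) :=
    (continuous_nn.tendsto _).comp ((tendsto_Xm hγ j hw).sub_const e1)
  exact le_of_tendsto h1 (Eventually.of_forall fun n => Pm_e1 hγ n j hw)

lemma nn_Xp_Pp (hγ : Summable (fun j : ℤ => ‖γ j‖)) (n : ℕ) (j : ℤ) {w : ℂ} (hw : ‖w‖ = 1) :
    nn (Pp γ n j w - Xp γ j w) ≤ tailp γ (j + n) := by
  have h1 : Tendsto (fun k => nn (Pp γ n j w - Pp γ (n+k) j w)) atTop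
      (𝓝 (nn (Pp γ n j w - Xp γ j w))) := by
    apply (continuous_nn.tendsto _).comp
    apply Tendsto.const_sub
    exact (tendsto_Xp hγ j hw).comp (tendsto_add_atTop_nat n |>.comp tendsto_id) |>.congr
      (fun k => by simp [Nat.add_comm])
  exact le_of_tendsto h1 (Eventually.of_forall fun k => Pp_chain' hγ n k j hw)

lemma nn_Xm_Pm (hγ : Summable (fun j : ℤ => ‖γ j‖)) (n : ℕ) (j : ℤ) {w : ℂ} (hw : ‖w‖ = 1) :
    nn (Pm γ n j w - Xm γ j w) ≤ tailm γ (j - n) := by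
  have h1 : Tendsto (fun k => nn (Pm γ n j w - Pm γ (n+k) j w)) atTop
      (𝓝 (nn (Pm γ n j w - Xm γ j w))) := by
    apply (continuous_nn.tendsto _).comp
    apply Tendsto.const_sub
    exact (tendsto_Xm hγ j hw).comp (tendsto_add_atTop_nat n |>.comp tendsto_id) |>.congr
      (fun k => by simp [Nat.add_comm])
  exact le_of_tendsto h1 (Eventually.of_forall fun k => Pm_chain' hγ n k j hw)

lemma nn_Xp (hγ : Summable (fun j : ℤ => ‖γ j‖)) (j : ℤ) {w : ℂ} (hw : ‖w‖ = 1) :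
    nn (Xp γ j w) = 1 := by
  have h1 : Tendsto (fun n => nn (Pp γ n j w)) atTop (𝓝 (nn (Xp γ j w))) :=
    (continuous_nn.tendsto _).comp (tendsto_Xp hγ j hw)
  have h2 : Tendsto (fun n : ℕ => nn (Pp γ n j w)) atTop (𝓝 1) := by
    simpa [funext fun n => nn_Pp (γ := γ) n j hw] using tendsto_const_nhds (α := ℝ) (x := 1)
  exact tendsto_nhds_unique h1 h2

lemma nn_Xm (hγ : Summable (fun j : ℤ => ‖γ j‖)) (j : ℤ) {w : ℂ} (hw : ‖w‖ = 1) :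
    nn (Xm γ j w) = 1 := by
  have h1 : Tendsto (fun n => nn (Pm γ n j w)) atTop (𝓝 (nn (Xm γ j w))) :=
    (continuous_nn.tendsto _).comp (tendsto_Xm hγ j hw)
  have h2 : Tendsto (fun n : ℕ => nn (Pm γ n j w)) atTop (𝓝 1) := by
    simpa [funext fun n => nn_Pm (γ := γ) n j hw] using tendsto_const_nhds (α := ℝ) (x := 1)
  exact tendsto_nhds_unique h1 h2


lemma tsum_comp_le (hγ : Summable (fun j : ℤ => ‖γ j‖)) (s₀ : Finset ℤ) (g : ℕ → ℤ)
    (hg : Function.Injective g) (hgs : ∀ n, g n ∉ s₀) (hsum : Summable (fun n => eps γ (g n))) :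
    ∑' n, eps γ (g n) ≤ ∑' x : {x : ℤ // x ∉ s₀}, eps γ x := by
  apply Summable.tsum_le_tsum_of_inj (fun n => (⟨g n, hgs n⟩ : {x : ℤ // x ∉ s₀}))
  · intro a b h
    exact hg (congrArg Subtype.val h)
  · intro c _
    exact eps_nonneg _
  · intro n; exact le_refl _
  · exact hsum
  · exact (heps hγ).subtype _

lemma tailp_tendsto (hγ : Summable (fun j : ℤ => ‖γ j‖)) :
    Tendsto (tailp γ) atTop (𝓝 0) := by
  rw [Metric.tendsto_nhds]
  intro ε hε
  have h := (tendsto_tsum_compl_atTop_zero (eps γ)).eventually (eventually_lt_nhds hε)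
  rw [eventually_atTop] at h
  obtain ⟨s₀, hs₀⟩ := h
  have hs := hs₀ s₀ (le_refl _)
  obtain ⟨M, hM⟩ := s₀.exists_le
  rw [eventually_atTop]
  refine ⟨M + 1, fun j hj => ?_⟩
  rw [Real.dist_eq, sub_zero, _root_.abs_of_nonneg (tailp_nonneg _)]
  calc tailp γ j ≤ ∑' x : {x : ℤ // x ∉ s₀}, eps γ x := by
        apply tsum_comp_le hγ s₀ (fun n : ℕ => j + n)
        · intro a b hab; simp only at hab; omega
        · intro n hn
          have := hM _ hn
          omega
        · exact summable_tailp hγ j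
    _ < ε := hs

lemma tailm_tendsto (hγ : Summable (fun j : ℤ => ‖γ j‖)) :
    Tendsto (tailm γ) atBot (𝓝 0) := by
  rw [Metric.tendsto_nhds]
  intro ε hε
  have h := (tendsto_tsum_compl_atTop_zero (eps γ)).eventually (eventually_lt_nhds hε)
  rw [eventually_atTop] at h
  obtain ⟨s₀, hs₀⟩ := h
  have hs := hs₀ s₀ (le_refl _)
  obtain ⟨M, hM⟩ := (s₀.image (fun x : ℤ => -x)).exists_le
  rw [eventually_atBot]
  refine ⟨-M - 1, fun j hj => ?_⟩
  rw [Real.dist_eq, sub_zero, _root_.abs_of_nonneg (tailm_nonneg _)]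
  calc tailm γ j ≤ ∑' x : {x : ℤ // x ∉ s₀}, eps γ x := by
        apply tsum_comp_le hγ s₀ (fun n : ℕ => j - 1 - n)
        · intro a b hab; simp only at hab; omega
        · intro n hn
          have := hM (-(j - 1 - n)) (Finset.mem_image_of_mem _ hn)
          omega
        · exact summable_tailm hγ j
    _ < ε := hs

end Gamma2

lemma polyPlus_congr {f g : ℂ → ℂ} (h : ∀ w : ℂ, ‖w‖ = 1 → f w = g w) (hg : PolyPlus g) :
    PolyPlus f := by
  obtain ⟨N, c, hc⟩ := hg
  exact ⟨N, c, fun w hw => (h w hw).trans (hc w hw)⟩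

lemma conj_dfac (c : ℂ) : conj (dfac c) = dfac c := Complex.conj_ofReal _

lemma conj_winv {w : ℂ} (hw : ‖w‖ = 1) : conj w⁻¹ = w := by
  rw [Complex.inv_eq_conj hw, Complex.conj_conj]

variable {γ : ℤ → ℂ}

lemma polyPlus_Pp (n : ℕ) (j : ℤ) :
    PolyPlus (fun w => conj ((Pp γ n j w).1)) ∧ PolyPlus (fun w => conj ((Pp γ n j w).2)) := by
  induction n generalizing j with
  | zero =>
    constructor
    · exact polyPlus_congr (fun w _ => by simp [Pp, e1]) (polyPlus_const 1)
    · exact polyPlus_congr (fun w _ => by simp [Pp, e1]) (polyPlus_const 0)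
  | succ n ih =>
    obtain ⟨h1, h2⟩ := ih (j+1)
    constructor
    · apply polyPlus_congr (g := fun w => dfac (γ j) *
        ((fun w => conj ((Pp γ n (j+1) w).1)) w - conj (γ j) * (w * conj ((Pp γ n (j+1) w).2))))
      · intro w hw
        show conj ((Sp (γ j) w (Pp γ n (j+1) w)).1) = _
        rw [Sp]
        simp only [map_mul, map_sub, conj_dfac, conj_winv hw]
        ring
      · exact polyPlus_const_mul _ (polyPlus_sub h1 (polyPlus_const_mul _ (polyPlus_mul_w h2)))
    · apply polyPlus_congr (g := fun w => dfac (γ j) *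
        (γ j * (fun w => conj ((Pp γ n (j+1) w).1)) w + w * conj ((Pp γ n (j+1) w).2)))
      · intro w hw
        show conj ((Sp (γ j) w (Pp γ n (j+1) w)).2) = _
        rw [Sp]
        simp only [map_mul, map_add, conj_dfac, conj_winv hw, Complex.conj_conj]
      · exact polyPlus_const_mul _ (polyPlus_add (polyPlus_const_mul _ h1) (polyPlus_mul_w h2))

lemma polyPlus_Pm (n : ℕ) (j : ℤ) :
    PolyPlus (fun w => (Pm γ n j w).1) ∧ PolyPlus (fun w => w⁻¹ * (Pm γ n j w).2) := by
  induction n generalizing j with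
  | zero =>
    constructor
    · exact polyPlus_congr (fun w _ => by simp [Pm, e1]) (polyPlus_const 1)
    · exact polyPlus_congr (fun w _ => by simp [Pm, e1]) (polyPlus_const 0)
  | succ n ih =>
    obtain ⟨h1, h2⟩ := ih (j-1)
    constructor
    · apply polyPlus_congr (g := fun w => dfac (γ (j-1)) *
        ((Pm γ n (j-1) w).1 + γ (j-1) * (w * (w⁻¹ * (Pm γ n (j-1) w).2))))
      · intro w hw
        have hw0 : w ≠ 0 := fun h => by simp [h] at hw
        show (Sm (γ (j-1)) w (Pm γ n (j-1) w)).1 = _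
        rw [Sm]
        field_simp
      · exact polyPlus_const_mul _ (polyPlus_add h1 (polyPlus_const_mul _ (polyPlus_mul_w h2)))
    · apply polyPlus_congr (g := fun w => dfac (γ (j-1)) *
        (-(conj (γ (j-1))) * (Pm γ n (j-1) w).1 + w * (w⁻¹ * (Pm γ n (j-1) w).2)))
      · intro w hw
        have hw0 : w ≠ 0 := fun h => by simp [h] at hw
        show w⁻¹ * (Sm (γ (j-1)) w (Pm γ n (j-1) w)).2 = _
        rw [Sm]
        field_simp
      · apply polyPlus_const_mul
        apply polyPlus_add (polyPlus_const_mul _ h1) (polyPlus_mul_w h2)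


lemma int_cast_add_atTop (j : ℤ) : Tendsto (fun n : ℕ => j + (n:ℤ)) atTop atTop :=
  tendsto_atTop.2 fun b => eventually_atTop.2 ⟨(b - j).toNat, fun n hn => by omega⟩

lemma int_cast_sub_atBot (j : ℤ) : Tendsto (fun n : ℕ => j - (n:ℤ)) atTop atBot :=
  tendsto_atBot.2 fun b => eventually_atTop.2 ⟨(j - b).toNat, fun n hn => by omega⟩

lemma tendsto_of_bound {f : ℤ → ℂ} {a : ℂ} {l : Filter ℤ} {b : ℤ → ℝ}
    (hb : Tendsto b l (𝓝 0)) (h : ∀ j, ‖f j - a‖ ≤ b j) : Tendsto f l (𝓝 a) := by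
  rw [tendsto_iff_norm_sub_tendsto_zero]
  exact squeeze_zero (fun j => norm_nonneg _) h hb

lemma nn_eq_zero {p : ℂ × ℂ} (h : nn p = 0) : p.1 = 0 ∧ p.2 = 0 := by
  constructor
  · have := (fst_le_nn p).trans h.le
    simpa using le_antisymm this (norm_nonneg _)
  · have := (snd_le_nn p).trans h.le
    simpa using le_antisymm this (norm_nonneg _)

lemma nn_zero : nn (0 : ℂ × ℂ) = 0 := by simp [nn_eq]

section Main
variable {γ : ℤ → ℂ}

lemma plusFamily_X (hγ : Summable (fun j : ℤ => ‖γ j‖)) :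
    PlusFamily γ (fun j w => (Xp γ j w).1) (fun j w => (Xp γ j w).2) := by
  constructor
  · intro j w hw
    have h := Xp_rec hγ j hw
    constructor
    · beta_reduce; rw [h]; rfl
    · beta_reduce; rw [h]; rfl
  · intro w hw
    constructor
    · apply tendsto_of_bound ((tailp_tendsto hγ))
      intro j
      have h1 : (Xp γ j w).1 - 1 = (Xp γ j w - e1).1 := by simp [e1]
      rw [h1]
      exact (fst_le_nn _).trans (nn_Xp_e1 hγ j hw)
    · apply tendsto_of_bound ((tailp_tendsto hγ))
      intro j
      have h1 : (Xp γ j w).2 - 0 = (Xp γ j w - e1).2 := by simp [e1]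
      rw [h1]
      exact (snd_le_nn _).trans (nn_Xp_e1 hγ j hw)

lemma minusFamily_X (hγ : Summable (fun j : ℤ => ‖γ j‖)) :
    MinusFamily γ (fun j w => (Xm γ j w).1) (fun j w => (Xm γ j w).2) := by
  constructor
  · intro j w hw
    have h := Xm_rec hγ j hw
    constructor
    · beta_reduce; rw [h]; rfl
    · beta_reduce; rw [h]; rfl
  · intro w hw
    constructor
    · apply tendsto_of_bound ((tailm_tendsto hγ))
      intro j
      have h1 : (Xm γ j w).1 - 1 = (Xm γ j w - e1).1 := by simp [e1]
      rw [h1]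
      exact (fst_le_nn _).trans (nn_Xm_e1 hγ j hw)
    · apply tendsto_of_bound ((tailm_tendsto hγ))
      intro j
      have h1 : (Xm γ j w).2 - 0 = (Xm γ j w - e1).2 := by simp [e1]
      rw [h1]
      exact (snd_le_nn _).trans (nn_Xm_e1 hγ j hw)

lemma plus_unique (A B A' B' : ℤ → ℂ → ℂ) (hf : PlusFamily γ A B) (hf' : PlusFamily γ A' B')
    (j : ℤ) {w : ℂ} (hw : ‖w‖ = 1) : A' j w = A j w ∧ B' j w = B j w := by
  set D : ℤ → ℂ × ℂ := fun k => (A' k w - A k w, B' k w - B k w) with hDdef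
  have hstep : ∀ k, D k = Sp (γ k) w (D (k+1)) := by
    intro k
    obtain ⟨h1, h2⟩ := hf.1 k w hw
    obtain ⟨h1', h2'⟩ := hf'.1 k w hw
    apply Prod.ext
    · show A' k w - A k w = (Sp (γ k) w (D (k+1))).1
      rw [h1, h1']
      simp only [Sp, hDdef]
      ring
    · show B' k w - B k w = (Sp (γ k) w (D (k+1))).2
      rw [h2, h2']
      simp only [Sp, hDdef]
      ring
  have hnorm : ∀ n : ℕ, nn (D j) = nn (D (j + n)) := by
    intro n
    induction n with
    | zero => simp
    | succ n ih =>
      rw [ih, hstep (j + n), nn_Sp _ _ hw]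
      congr 2
      push_cast; ring
  have hlimD : Tendsto D atTop (𝓝 0) := by
    have t1 : Tendsto (fun k : ℤ => A' k w - A k w) atTop (𝓝 0) := by
      have := ((hf'.2 w hw).1).sub ((hf.2 w hw).1)
      simpa using this
    have t2 : Tendsto (fun k : ℤ => B' k w - B k w) atTop (𝓝 0) := by
      have := ((hf'.2 w hw).2).sub ((hf.2 w hw).2)
      simpa using this
    exact t1.prodMk_nhds t2
  have hzero : nn (D j) = 0 := by
    have hc : Tendsto (fun n : ℕ => nn (D (j + n))) atTop (𝓝 (nn (D j))) := by
      have : (fun n : ℕ => nn (D (j + n))) = fun _ => nn (D j) := funext fun n => (hnorm n).symm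
      rw [this]; exact tendsto_const_nhds
    have hc2 : Tendsto (fun n : ℕ => nn (D (j + n))) atTop (𝓝 0) := by
      rw [← nn_zero]
      exact (continuous_nn.tendsto _).comp (hlimD.comp (int_cast_add_atTop j))
    exact tendsto_nhds_unique hc hc2
  obtain ⟨e1', e2'⟩ := nn_eq_zero hzero
  constructor
  · have : A' j w - A j w = 0 := e1'
    linear_combination this
  · have : B' j w - B j w = 0 := e2'
    linear_combination this

lemma minus_unique (A B A' B' : ℤ → ℂ → ℂ) (hf : MinusFamily γ A B) (hf' : MinusFamily γ A' B')
    (j : ℤ) {w : ℂ} (hw : ‖w‖ = 1) : A' j w = A j w ∧ B' j w = B j w := by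
  set D : ℤ → ℂ × ℂ := fun k => (A' k w - A k w, B' k w - B k w) with hDdef
  have hstep : ∀ k, D (k+1) = Sm (γ k) w (D k) := by
    intro k
    obtain ⟨h1, h2⟩ := hf.1 k w hw
    obtain ⟨h1', h2'⟩ := hf'.1 k w hw
    apply Prod.ext
    · show A' (k+1) w - A (k+1) w = (Sm (γ k) w (D k)).1
      rw [h1, h1']
      simp only [Sm, hDdef]
      ring
    · show B' (k+1) w - B (k+1) w = (Sm (γ k) w (D k)).2
      rw [h2, h2']
      simp only [Sm, hDdef]
      ring
  have hnorm : ∀ n : ℕ, nn (D j) = nn (D (j - n)) := by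
    intro n
    induction n with
    | zero => simp
    | succ n ih =>
      have hidx : j - (n:ℤ) = (j - (n:ℤ) - 1) + 1 := by ring
      rw [ih, hidx, hstep (j - (n:ℤ) - 1), nn_Sm _ _ hw]
      congr 2
      push_cast; ring
  have hlimD : Tendsto D atBot (𝓝 0) := by
    have t1 : Tendsto (fun k : ℤ => A' k w - A k w) atBot (𝓝 0) := by
      have := ((hf'.2 w hw).1).sub ((hf.2 w hw).1)
      simpa using this
    have t2 : Tendsto (fun k : ℤ => B' k w - B k w) atBot (𝓝 0) := by
      have := ((hf'.2 w hw).2).sub ((hf.2 w hw).2)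
      simpa using this
    exact t1.prodMk_nhds t2
  have hzero : nn (D j) = 0 := by
    have hc : Tendsto (fun n : ℕ => nn (D (j - n))) atTop (𝓝 (nn (D j))) := by
      have : (fun n : ℕ => nn (D (j - n))) = fun _ => nn (D j) := funext fun n => (hnorm n).symm
      rw [this]; exact tendsto_const_nhds
    have hc2 : Tendsto (fun n : ℕ => nn (D (j - n))) atTop (𝓝 0) := by
      rw [← nn_zero]
      exact (continuous_nn.tendsto _).comp (hlimD.comp (int_cast_sub_atBot j))
    exact tendsto_nhds_unique hc hc2
  obtain ⟨e1', e2'⟩ := nn_eq_zero hzero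
  constructor
  · have : A' j w - A j w = 0 := e1'
    linear_combination this
  · have : B' j w - B j w = 0 := e2'
    linear_combination this

lemma hardy_Am (hγ : Summable (fun j : ℤ => ‖γ j‖)) (j : ℤ) :
    MemHplusC (fun w => (Xm γ j w).1) := by
  apply memHplusC_of_approx _ (fun n w => (Pm γ n j w).1) (fun n => tailm γ (j - n))
  · exact (tailm_tendsto hγ).comp (int_cast_sub_atBot j)
  · intro n w hw
    have h : (Xm γ j w).1 - (Pm γ n j w).1 = -((Pm γ n j w - Xm γ j w).1) := by
      simp
    rw [h, norm_neg]
    exact (fst_le_nn _).trans (nn_Xm_Pm hγ n j hw)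
  · exact fun n => (polyPlus_Pm n j).1
  · intro w hw
    exact (fst_le_nn _).trans (nn_Xm hγ j hw).le

lemma hardy_Bm (hγ : Summable (fun j : ℤ => ‖γ j‖)) (j : ℤ) :
    MemHplusC (fun w => w⁻¹ * (Xm γ j w).2) := by
  apply memHplusC_of_approx _ (fun n w => w⁻¹ * (Pm γ n j w).2) (fun n => tailm γ (j - n))
  · exact (tailm_tendsto hγ).comp (int_cast_sub_atBot j)
  · intro n w hw
    have hwinv : ‖w⁻¹‖ = 1 := by rw [norm_inv, hw]; norm_num
    have h : w⁻¹ * (Xm γ j w).2 - w⁻¹ * (Pm γ n j w).2 = w⁻¹ * (-((Pm γ n j w - Xm γ j w).2)) := by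
      simp; ring
    rw [h, norm_mul, hwinv, one_mul, norm_neg]
    exact (snd_le_nn _).trans (nn_Xm_Pm hγ n j hw)
  · exact fun n => (polyPlus_Pm n j).2
  · intro w hw
    have hwinv : ‖w⁻¹‖ = 1 := by rw [norm_inv, hw]; norm_num
    rw [norm_mul, hwinv, one_mul]
    exact (snd_le_nn _).trans (nn_Xm hγ j hw).le

lemma hardy_Ap (hγ : Summable (fun j : ℤ => ‖γ j‖)) (j : ℤ) :
    MemHplusC (fun w => conj ((Xp γ j w).1)) := by
  apply memHplusC_of_approx _ (fun n w => conj ((Pp γ n j w).1)) (fun n => tailp γ (j + n))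
  · exact (tailp_tendsto hγ).comp (int_cast_add_atTop j)
  · intro n w hw
    have h : conj ((Xp γ j w).1) - conj ((Pp γ n j w).1) = conj (-((Pp γ n j w - Xp γ j w).1)) := by
      rw [← map_sub]; congr 1; simp
    rw [h, RCLike.norm_conj, norm_neg]
    exact (fst_le_nn _).trans (nn_Xp_Pp hγ n j hw)
  · exact fun n => (polyPlus_Pp n j).1
  · intro w hw
    rw [RCLike.norm_conj]
    exact (fst_le_nn _).trans (nn_Xp hγ j hw).le

lemma hardy_Bp (hγ : Summable (fun j : ℤ => ‖γ j‖)) (j : ℤ) :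
    MemHplusC (fun w => conj ((Xp γ j w).2)) := by
  apply memHplusC_of_approx _ (fun n w => conj ((Pp γ n j w).2)) (fun n => tailp γ (j + n))
  · exact (tailp_tendsto hγ).comp (int_cast_add_atTop j)
  · intro n w hw
    have h : conj ((Xp γ j w).2) - conj ((Pp γ n j w).2) = conj (-((Pp γ n j w - Xp γ j w).2)) := by
      rw [← map_sub]; congr 1; simp
    rw [h, RCLike.norm_conj, norm_neg]
    exact (snd_le_nn _).trans (nn_Xp_Pp hγ n j hw)
  · exact fun n => (polyPlus_Pp n j).2
  · intro w hw
    rw [RCLike.norm_conj]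
    exact (snd_le_nn _).trans (nn_Xp hγ j hw).le

end Main

/-- forward discrete scattering. -/
theorem forward_discrete_scattering
    (γ : ℤ → ℂ) (hγ : Summable (fun j : ℤ => ‖γ j‖)) :
    ∃ Ap Bp Am Bm : ℤ → ℂ → ℂ,
      PlusFamily γ Ap Bp ∧ MinusFamily γ Am Bm ∧
      (∀ Ap' Bp' : ℤ → ℂ → ℂ, PlusFamily γ Ap' Bp' →
        ∀ j : ℤ, ∀ w : ℂ, ‖w‖ = 1 → Ap' j w = Ap j w ∧ Bp' j w = Bp j w) ∧
      (∀ Am' Bm' : ℤ → ℂ → ℂ, MinusFamily γ Am' Bm' →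
        ∀ j : ℤ, ∀ w : ℂ, ‖w‖ = 1 → Am' j w = Am j w ∧ Bm' j w = Bm j w) ∧
      (∀ j : ℤ,
        MemHplusC (Am j) ∧
        MemHplusC (fun w => w⁻¹ * Bm j w) ∧
        MemHplusC (fun w => conj (Ap j w)) ∧
        MemHplusC (fun w => conj (Bp j w))) := by
  refine ⟨fun j w => (Xp γ j w).1, fun j w => (Xp γ j w).2,
          fun j w => (Xm γ j w).1, fun j w => (Xm γ j w).2,
          plusFamily_X hγ, minusFamily_X hγ, ?_, ?_, ?_⟩
  · intro Ap' Bp' h j w hw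
    exact plus_unique _ _ _ _ (plusFamily_X hγ) h j hw
  · intro Am' Bm' h j w hw
    exact minus_unique _ _ _ _ (minusFamily_X hγ) h j hw
  · intro j
    exact ⟨hardy_Am hγ j, hardy_Bm hγ j, hardy_Ap hγ j, hardy_Bp hγ j⟩


end
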